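/- arXiv:1910.10918 — 2 statements merged into one kernel-verified Lean document; each statement's English description precedes it below -/
import Mathlib

section
/- If A ⊂ ℝ³ is an imaginary cube of a cube C, then every edge of C contains at least one point of A. -/
/- STATEMENT 4: If `A ⊆ ℝ³` is an imaginary cube of a cube `C`, then every edge of `C`
contains a point of `A`. An edge of the cube `a Q C₀ + w` is the image of an edge of
`C₀ = [-1,1]³`, i.e. of a set `{x ∈ C₀ | ∀ j ≠ i, x j = ε j}` with `ε j = ±1`. -/

noncomputable section
open Matrix

abbrev E3 := EuclideanSpace ℝ (Fin 3)

/-- The standard cube `C₀ = [-1,1]³`. -/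
def C0 : Set E3 := {x | ∀ i, x i ∈ Set.Icc (-1 : ℝ) 1}

/-- The cube `a • Q C₀ + w`. -/
def cubeImage (a : ℝ) (Q : Matrix (Fin 3) (Fin 3) ℝ) (w : E3) : Set E3 :=
  (fun x => a • Matrix.toEuclideanLin Q x + w) '' C0

/-- The plane parallel to the face of the cube `a Q C₀ + w` orthogonal to direction `Q eᵢ`:
the span of the images of the other two coordinate vectors. -/
def facePlane (Q : Matrix (Fin 3) (Fin 3) ℝ) (i : Fin 3) : Submodule ℝ E3 :=
  Submodule.span ℝ {y | ∃ j ≠ i, y = Matrix.toEuclideanLin Q (EuclideanSpace.single j 1)}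

/-- `A` is an imaginary cube of the cube with data `(a, Q, w)`: the three projections of `A`
in the face directions agree with those of the cube. -/
def IsImaginaryCubeData (A : Set E3) (a : ℝ) (Q : Matrix (Fin 3) (Fin 3) ℝ) (w : E3) : Prop :=
  ∀ i : Fin 3,
    (Submodule.orthogonalProjectionOnto (facePlane Q i)) '' A =
      (Submodule.orthogonalProjectionOnto (facePlane Q i)) '' (cubeImage a Q w)

/-- `A` is an imaginary cube of the set `C`. -/
def IsImaginaryCubeOf (A C : Set E3) : Prop :=
  ∃ (a : ℝ) (Q : Matrix (Fin 3) (Fin 3) ℝ) (w : E3),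
    0 < a ∧ Q ∈ Matrix.specialOrthogonalGroup (Fin 3) ℝ ∧ C = cubeImage a Q w ∧
      IsImaginaryCubeData A a Q w

/-- `A` is an imaginary cube. -/
def IsImaginaryCube (A : Set E3) : Prop := ∃ C : Set E3, IsImaginaryCubeOf A C

open RealInnerProductSpace in
private lemma aux_open_check : True := trivial

section Aux
open RealInnerProductSpace

def qcol (Q : Matrix (Fin 3) (Fin 3) ℝ) (i : Fin 3) : E3 :=
  Matrix.toEuclideanLin Q (EuclideanSpace.single i 1)

lemma qcol_apply (Q : Matrix (Fin 3) (Fin 3) ℝ) (i m : Fin 3) : qcol Q i m = Q m i := by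
  simp [qcol, Matrix.toEuclideanLin_apply, Matrix.mulVec, dotProduct,
    EuclideanSpace.single_apply]

lemma toEucl_apply (Q : Matrix (Fin 3) (Fin 3) ℝ) (x : E3) (m : Fin 3) :
    Matrix.toEuclideanLin Q x m = ∑ k, Q m k * x k := by
  simp [Matrix.toEuclideanLin_apply, Matrix.mulVec, dotProduct]

lemma inner_eq (x y : E3) : ⟪x, y⟫ = ∑ i, x i * y i := by
  simp [PiLp.inner_apply]
  exact Finset.sum_congr rfl fun _ _ => mul_comm _ _

lemma inner_qcol (Q : Matrix (Fin 3) (Fin 3) ℝ) (j : Fin 3) (x : E3) :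
    ⟪qcol Q j, x⟫ = ∑ m, Q m j * x m := by
  simp [inner_eq, qcol_apply]

lemma inner_qcol_toEucl (Q' Q : Matrix (Fin 3) (Fin 3) ℝ) (j : Fin 3) (t : E3) :
    ⟪qcol Q' j, Matrix.toEuclideanLin Q t⟫ = ∑ k, (Q'ᵀ * Q) j k * t k := by
  simp only [inner_qcol, toEucl_apply, Matrix.mul_apply, Finset.sum_mul,
    Matrix.transpose_apply, Finset.mul_sum]
  rw [Finset.sum_comm]
  congr 1; ext m; congr 1; ext k; ring

lemma inner_qcol_qcol (Q' Q : Matrix (Fin 3) (Fin 3) ℝ) (j k : Fin 3) :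
    ⟪qcol Q' j, qcol Q k⟫ = (Q'ᵀ * Q) j k := by
  simp [inner_eq, qcol_apply, Matrix.mul_apply, Matrix.transpose_apply]

lemma toEucl_toEucl (P Q : Matrix (Fin 3) (Fin 3) ℝ) (x : E3) :
    Matrix.toEuclideanLin P (Matrix.toEuclideanLin Q x) = Matrix.toEuclideanLin (P * Q) x := by
  apply PiLp.ext; intro m
  simp only [toEucl_apply, Matrix.mul_apply, Finset.sum_mul, Finset.mul_sum]
  rw [Finset.sum_comm]
  congr 1; ext k; congr 1; ext l; ring

lemma toEucl_one (x : E3) : Matrix.toEuclideanLin (1 : Matrix (Fin 3) (Fin 3) ℝ) x = x := by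
  apply PiLp.ext; intro m
  simp [toEucl_apply, Matrix.one_apply]

lemma sum_single (x : E3) : x = ∑ j, x j • (EuclideanSpace.single j 1 : E3) := by
  apply PiLp.ext; intro m
  have : (∑ j, x j • (EuclideanSpace.single j 1 : E3)) m
      = ∑ j, (x j • (EuclideanSpace.single j 1 : E3)) m := by
    rw [WithLp.ofLp_sum]; exact Finset.sum_apply m Finset.univ _
  rw [this]
  simp [EuclideanSpace.single_apply, Finset.sum_ite_eq]

lemma abs_inner_le_of_mem (a : ℝ) (ha : 0 < a) (Q : Matrix (Fin 3) (Fin 3) ℝ)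
    (hQ : Qᵀ * Q = 1) (w p : E3) (hp : p ∈ cubeImage a Q w) (j : Fin 3) :
    |⟪qcol Q j, p - w⟫| ≤ a := by
  obtain ⟨t, ht, rfl⟩ := hp
  have : a • Matrix.toEuclideanLin Q t + w - w = a • Matrix.toEuclideanLin Q t := by abel
  rw [this, real_inner_smul_right, inner_qcol_toEucl, hQ]
  have : ∑ k, (1 : Matrix (Fin 3) (Fin 3) ℝ) j k * t k = t j := by
    simp [Matrix.one_apply]
  rw [this, abs_mul, abs_of_pos ha]
  have := ht j
  have h1 : |t j| ≤ 1 := abs_le.2 ⟨this.1, this.2⟩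
  nlinarith

-- backward: explicit coordinates

lemma mem_cube_of_coords (a : ℝ) (ha : 0 < a) (Q : Matrix (Fin 3) (Fin 3) ℝ)
    (hQ' : Q * Qᵀ = 1) (w p : E3) (hb : ∀ j, |⟪qcol Q j, p - w⟫| ≤ a) :
    ∃ x ∈ C0, (∀ j, x j = a⁻¹ * ⟪qcol Q j, p - w⟫) ∧
      p = a • Matrix.toEuclideanLin Q x + w := by
  refine ⟨a⁻¹ • Matrix.toEuclideanLin Qᵀ (p - w), ?_, ?_, ?_⟩
  · intro j
    have hx : (a⁻¹ • Matrix.toEuclideanLin Qᵀ (p - w)) j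
        = a⁻¹ * ⟪qcol Q j, p - w⟫ := by
      rw [PiLp.smul_apply, toEucl_apply, inner_qcol]
      simp [Matrix.transpose_apply, smul_eq_mul]
    rw [hx]
    have h1 := (abs_le.1 (hb j)).1
    have h2 := (abs_le.1 (hb j)).2
    have hainv : (0:ℝ) < a⁻¹ := inv_pos.2 ha
    constructor
    · nlinarith [mul_le_mul_of_nonneg_left h1 (le_of_lt hainv),
        inv_mul_cancel₀ (ne_of_gt ha)]
    · nlinarith [mul_le_mul_of_nonneg_left h2 (le_of_lt hainv),
        inv_mul_cancel₀ (ne_of_gt ha)]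
  · intro j
    rw [PiLp.smul_apply, toEucl_apply, inner_qcol]
    simp [Matrix.transpose_apply, smul_eq_mul]
  · rw [LinearMap.map_smul, toEucl_toEucl, hQ', smul_smul,
      mul_inv_cancel₀ (ne_of_gt ha), one_smul, toEucl_one]
    abel

lemma facePlane_eq (Q : Matrix (Fin 3) (Fin 3) ℝ) (hQ : Qᵀ * Q = 1) (hQ' : Q * Qᵀ = 1)
    (i : Fin 3) : facePlane Q i = (ℝ ∙ qcol Q i)ᗮ := by
  apply le_antisymm
  · rw [facePlane, Submodule.span_le]
    rintro y ⟨j, hj, rfl⟩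
    rw [SetLike.mem_coe, Submodule.mem_orthogonal_singleton_iff_inner_left]
    show ⟪qcol Q j, qcol Q i⟫ = 0
    rw [inner_qcol_qcol, hQ, Matrix.one_apply]
    simp [hj]
  · intro z hz
    rw [Submodule.mem_orthogonal_singleton_iff_inner_right] at hz
    rw [inner_qcol] at hz
    have hzi : Matrix.toEuclideanLin Qᵀ z i = 0 := by
      rw [toEucl_apply]
      simpa [Matrix.transpose_apply] using hz
    have hrec : z = Matrix.toEuclideanLin Q (Matrix.toEuclideanLin Qᵀ z) := by
      rw [toEucl_toEucl, hQ', toEucl_one]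
    set c := Matrix.toEuclideanLin Qᵀ z with hc
    have hcs : c = ∑ j, c j • (EuclideanSpace.single j 1 : E3) := sum_single c
    rw [hrec, hcs, map_sum]
    apply Submodule.sum_mem
    intro j _
    rcases eq_or_ne j i with rfl | hji
    · rw [LinearMap.map_smul, hzi, zero_smul]
      exact Submodule.zero_mem _
    · rw [LinearMap.map_smul]
      exact Submodule.smul_mem _ _ (Submodule.subset_span ⟨j, hji, rfl⟩)

lemma l1_ge_one (x : Fin 3 → ℝ) (h2 : ∑ k, (x k)^2 = 1) : 1 ≤ ∑ k, |x k| := by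
  by_contra hlt
  push_neg at hlt
  have hnn : ∀ k ∈ Finset.univ, (0:ℝ) ≤ |x k| := fun k _ => abs_nonneg _
  have hS : (0:ℝ) ≤ ∑ k, |x k| := Finset.sum_nonneg hnn
  have : ∑ k, (x k)^2 ≤ (∑ k, |x k|) * (∑ k, |x k|) := by
    calc ∑ k, (x k)^2 = ∑ k, |x k| * |x k| := by
          congr 1; ext k; rw [← sq_abs, sq]
      _ ≤ ∑ k, |x k| * (∑ l, |x l|) := by
          apply Finset.sum_le_sum
          intro k _
          exact mul_le_mul_of_nonneg_left
            (Finset.single_le_sum hnn (Finset.mem_univ k)) (abs_nonneg _)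
      _ = (∑ k, |x k|) * (∑ l, |x l|) := by rw [← Finset.sum_mul]
  nlinarith

lemma single_signed (x : Fin 3 → ℝ) (h1 : ∑ k, |x k| ≤ 1) (h2 : ∑ k, (x k)^2 = 1) :
    ∃ k, (x k = 1 ∨ x k = -1) ∧ ∀ l ≠ k, x l = 0 := by
  -- pick k with |x k| maximal
  obtain ⟨k, _, hk⟩ := Finset.exists_max_image Finset.univ (fun k => |x k|) ⟨0, Finset.mem_univ 0⟩
  have hnn : ∀ l ∈ Finset.univ, (0:ℝ) ≤ |x l| := fun l _ => abs_nonneg _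
  have hk1 : |x k| ≤ 1 := le_trans (Finset.single_le_sum hnn (Finset.mem_univ k)) h1
  have hge : 1 ≤ |x k| := by
    have : ∑ l, (x l)^2 ≤ |x k| * ∑ l, |x l| := by
      rw [Finset.mul_sum]
      apply Finset.sum_le_sum
      intro l _
      calc (x l)^2 = |x l| * |x l| := by rw [← sq_abs, sq]
        _ ≤ |x k| * |x l| := mul_le_mul_of_nonneg_right (hk l (Finset.mem_univ l)) (abs_nonneg _)
    nlinarith [Finset.sum_nonneg hnn,
      mul_le_mul_of_nonneg_left h1 (abs_nonneg (x k))]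
  have hxk : |x k| = 1 := le_antisymm hk1 hge
  have hsq : (x k)^2 = 1 := by nlinarith [abs_mul_abs_self (x k)]
  refine ⟨k, ?_, ?_⟩
  · rcases abs_eq (by norm_num : (0:ℝ) ≤ 1) |>.1 hxk with h | h
    · exact Or.inl h
    · exact Or.inr h
  · intro l hl
    have hz : ∑ m ∈ Finset.univ.erase k, (x m)^2 = 0 := by
      have h2' : ∑ m ∈ Finset.univ.erase k, (x m)^2 + (x k)^2 = 1 := by
        rw [Finset.sum_erase_add Finset.univ _ (Finset.mem_univ k)]
        exact h2
      linarith
    have := (Finset.sum_eq_zero_iff_of_nonneg (fun m _ => sq_nonneg (x m))).1 hz l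
      (Finset.mem_erase.2 ⟨hl, Finset.mem_univ l⟩)
    exact pow_eq_zero_iff (by norm_num) |>.1 this

lemma mul_sign (x : ℝ) : x * Real.sign x = |x| := by
  rcases lt_trichotomy x 0 with h | h | h
  · rw [Real.sign_of_neg h, abs_of_neg h]; ring
  · simp [h]
  · rw [Real.sign_of_pos h, abs_of_pos h]; ring

lemma abs_sign_le (x : ℝ) : |Real.sign x| ≤ 1 := by
  rcases Real.sign_apply_eq x with h | h | h <;> rw [h] <;> norm_num

lemma cube_subset_ineq (a a' : ℝ) (ha : 0 < a)
    (Q Q' : Matrix (Fin 3) (Fin 3) ℝ) (w w' : E3)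
    (hQ'1 : Q'ᵀ * Q' = 1) (ha' : 0 < a')
    (hsub : cubeImage a Q w ⊆ cubeImage a' Q' w') (j : Fin 3) :
    a * ∑ k, |(Q'ᵀ * Q) j k| ≤ a' := by
  set B := Q'ᵀ * Q with hB
  set t : E3 := (WithLp.equiv 2 (Fin 3 → ℝ)).symm (fun k => Real.sign (B j k)) with ht
  have htk : ∀ k, t k = Real.sign (B j k) := fun k => rfl
  have htC : t ∈ C0 := by
    intro k
    rw [htk]
    exact Set.mem_Icc.2 (abs_le.1 (abs_sign_le _))
  have htC' : (-t) ∈ C0 := by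
    intro k
    have := abs_le.1 (abs_sign_le (B j k))
    constructor <;> simp [htk] <;> linarith [this.1, this.2]
  have hmem : ∀ u ∈ C0, |⟪qcol Q' j, a • Matrix.toEuclideanLin Q u + w - w'⟫| ≤ a' := by
    intro u hu
    exact abs_inner_le_of_mem a' ha' Q' hQ'1 w' _ (hsub ⟨u, hu, rfl⟩) j
  have key : ∀ u : E3, ⟪qcol Q' j, a • Matrix.toEuclideanLin Q u + w - w'⟫
      = a * (∑ k, B j k * u k) + ⟪qcol Q' j, w - w'⟫ := by
    intro u
    have : a • Matrix.toEuclideanLin Q u + w - w'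
        = a • Matrix.toEuclideanLin Q u + (w - w') := by abel
    rw [this, inner_add_right, real_inner_smul_right, inner_qcol_toEucl]
  have h1 := hmem t htC
  have h2 := hmem (-t) htC'
  rw [key] at h1 h2
  have hsum : ∑ k, B j k * t k = ∑ k, |B j k| := by
    congr 1; ext k; rw [htk, mul_sign]
  have hsum' : ∑ k, B j k * (-t) k = -∑ k, |B j k| := by
    rw [← Finset.sum_neg_distrib]
    congr 1; ext k
    have : (-t) k = -(t k) := rfl
    rw [this, htk, ← mul_sign]; ring
  rw [hsum] at h1
  rw [hsum'] at h2
  have e1 := (abs_le.1 h1).2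
  have e2 := (abs_le.1 h2).1
  linarith

lemma row_sq_one (Q Q' : Matrix (Fin 3) (Fin 3) ℝ)
    (hQ2 : Q * Qᵀ = 1) (hQ'1 : Q'ᵀ * Q' = 1) (j : Fin 3) :
    ∑ k, ((Q'ᵀ * Q) j k)^2 = 1 := by
  have : ∑ k, ((Q'ᵀ * Q) j k)^2 = ((Q'ᵀ * Q) * (Q'ᵀ * Q)ᵀ) j j := by
    rw [Matrix.mul_apply]
    congr 1; ext k; rw [Matrix.transpose_apply, sq]
  rw [this, Matrix.transpose_mul, Matrix.transpose_transpose]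
  have h : Q'ᵀ * Q * (Qᵀ * Q') = 1 := by
    rw [← Matrix.mul_assoc, Matrix.mul_assoc Q'ᵀ Q Qᵀ, hQ2, Matrix.mul_one, hQ'1]
  rw [h]
  simp [Matrix.one_apply]

lemma rigidity (a a' : ℝ) (ha : 0 < a) (ha' : 0 < a')
    (Q Q' : Matrix (Fin 3) (Fin 3) ℝ) (w w' : E3)
    (hQ1 : Qᵀ * Q = 1) (hQ2 : Q * Qᵀ = 1)
    (hQ'1 : Q'ᵀ * Q' = 1) (hQ'2 : Q' * Q'ᵀ = 1)
    (hset : cubeImage a Q w = cubeImage a' Q' w') (i : Fin 3) :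
    ∃ i' s, (s = (1:ℝ) ∨ s = -1) ∧ qcol Q i = s • qcol Q' i' := by
  have hrow : ∀ j, a * ∑ k, |(Q'ᵀ * Q) j k| ≤ a' :=
    cube_subset_ineq a a' ha Q Q' w w' hQ'1 ha' hset.le
  have hcol : ∀ j, a' * ∑ k, |(Qᵀ * Q') j k| ≤ a :=
    cube_subset_ineq a' a ha' Q' Q w' w hQ1 ha hset.ge
  have hrsq : ∀ j, ∑ k, ((Q'ᵀ * Q) j k)^2 = 1 := row_sq_one Q Q' hQ2 hQ'1
  have hcsq : ∀ j, ∑ k, ((Qᵀ * Q') j k)^2 = 1 := row_sq_one Q' Q hQ'2 hQ1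
  have haa : a ≤ a' := by
    have h1 := l1_ge_one (fun k => (Q'ᵀ * Q) 0 k) (hrsq 0)
    have h2 := hrow 0
    nlinarith
  have haa' : a' ≤ a := by
    have h1 := l1_ge_one (fun k => (Qᵀ * Q') 0 k) (hcsq 0)
    have h2 := hcol 0
    nlinarith
  have he : a = a' := le_antisymm haa haa'
  have hli : ∑ k, |(Qᵀ * Q') i k| ≤ 1 := by
    have := hcol i
    rw [← he] at this
    have h1 := l1_ge_one (fun k => (Qᵀ * Q') i k) (hcsq i)
    nlinarith
  obtain ⟨i', hs, hz⟩ := single_signed (fun k => (Qᵀ * Q') i k) hli (hcsq i)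
  refine ⟨i', (Qᵀ * Q') i i', hs, ?_⟩
  apply PiLp.ext; intro m
  have hQm : Q m i = ∑ k, Q' m k * (Q'ᵀ * Q) k i := by
    have : (Q' * (Q'ᵀ * Q)) m i = Q m i := by
      rw [← Matrix.mul_assoc, hQ'2, Matrix.one_mul]
    rw [← this, Matrix.mul_apply]
  have hBsym : ∀ k, (Q'ᵀ * Q) k i = (Qᵀ * Q') i k := by
    intro k
    rw [Matrix.mul_apply, Matrix.mul_apply]
    congr 1; ext m; rw [Matrix.transpose_apply, Matrix.transpose_apply]; ring
  rw [qcol_apply, PiLp.smul_apply, qcol_apply, smul_eq_mul, hQm]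
  rw [Finset.sum_eq_single i']
  · rw [hBsym]; ring
  · intro k _ hk
    rw [hBsym, hz k hk, mul_zero]
  · intro hni
    exact absurd (Finset.mem_univ i') hni

lemma proj_sub_mem (K : Submodule ℝ E3) (p c : E3)
    (hpc : Submodule.orthogonalProjectionOnto K p = Submodule.orthogonalProjectionOnto K c) : p - c ∈ Kᗮ := by
  have h1 := Submodule.sub_starProjection_mem_orthogonal (K := K) p
  have h2 := Submodule.sub_starProjection_mem_orthogonal (K := K) c
  have : p - c = (p - Submodule.orthogonalProjectionOnto K p) - (c - Submodule.orthogonalProjectionOnto K c) := by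
    rw [hpc]; abel
  rw [this]
  exact Submodule.sub_mem _ h1 h2

lemma inner_eq_of_sub_mem_span (Q : Matrix (Fin 3) (Fin 3) ℝ) (hQ1 : Qᵀ * Q = 1)
    (k : Fin 3) (p c : E3) (hperp : p - c ∈ ℝ ∙ qcol Q k) :
    ∀ j ≠ k, ⟪qcol Q j, p⟫ = ⟪qcol Q j, c⟫ := by
  intro j hj
  obtain ⟨r, hr⟩ := Submodule.mem_span_singleton.1 hperp
  have hz : ⟪qcol Q j, p - c⟫ = 0 := by
    rw [← hr, real_inner_smul_right, inner_qcol_qcol, hQ1, Matrix.one_apply, if_neg hj,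
      mul_zero]
  rw [inner_sub_right] at hz
  linarith

lemma orthoFacts (Q : Matrix (Fin 3) (Fin 3) ℝ)
    (hQ : Q ∈ Matrix.specialOrthogonalGroup (Fin 3) ℝ) : Qᵀ * Q = 1 ∧ Q * Qᵀ = 1 := by
  have h1 := (Matrix.mem_specialOrthogonalGroup_iff.1 hQ).1
  have h2 := (Matrix.mem_orthogonalGroup_iff (Fin 3) ℝ).1 h1
  have h3 := (Matrix.mem_orthogonalGroup_iff' (Fin 3) ℝ).1 h1
  have hstar : star Q = Qᵀ := by
    rw [Matrix.star_eq_conjTranspose, Matrix.conjTranspose_eq_transpose_of_trivial]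
  exact ⟨h3, h2⟩

end Aux

open RealInnerProductSpace in
theorem imaginaryCube_meets_edges (A C : Set E3) (h : IsImaginaryCubeOf A C)
    (a : ℝ) (Q : Matrix (Fin 3) (Fin 3) ℝ) (w : E3)
    (ha : 0 < a) (hQ : Q ∈ Matrix.specialOrthogonalGroup (Fin 3) ℝ)
    (hC : C = cubeImage a Q w)
    (i : Fin 3) (ε : Fin 3 → ℝ) (hε : ∀ j, ε j = 1 ∨ ε j = -1) :
    ∃ p ∈ A, ∃ x ∈ C0, (∀ j ≠ i, x j = ε j) ∧ p = a • Matrix.toEuclideanLin Q x + w := by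
  obtain ⟨a', Q', w', ha', hQ'so, hC', hdata⟩ := h
  obtain ⟨hQ1, hQ2⟩ := orthoFacts Q hQ
  obtain ⟨hQ'1, hQ'2⟩ := orthoFacts Q' hQ'so
  have hset : cubeImage a Q w = cubeImage a' Q' w' := by rw [← hC, ← hC']
  -- Step A : A ⊆ cube
  have hA : A ⊆ cubeImage a' Q' w' := by
    intro p hp
    have hb : ∀ j, |⟪qcol Q' j, p - w'⟫| ≤ a' := by
      intro j
      set k := j + 1 with hkdef
      have hjk : j ≠ k := by
        fin_cases j <;> simp [hkdef] <;> decide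
      have hmemproj : Submodule.orthogonalProjectionOnto (facePlane Q' k) p
          ∈ Submodule.orthogonalProjectionOnto (facePlane Q' k) '' (cubeImage a' Q' w') := by
        rw [← hdata k]
        exact Set.mem_image_of_mem _ hp
      obtain ⟨c, hc, hpc⟩ := hmemproj
      have hperp : p - c ∈ ℝ ∙ qcol Q' k := by
        have := proj_sub_mem (facePlane Q' k) p c hpc.symm
        rwa [facePlane_eq Q' hQ'1 hQ'2 k, Submodule.orthogonal_orthogonal] at this
      have heq := inner_eq_of_sub_mem_span Q' hQ'1 k p c hperp j hjk
      have : ⟪qcol Q' j, p - w'⟫ = ⟪qcol Q' j, c - w'⟫ := by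
        rw [inner_sub_right, inner_sub_right, heq]
      rw [this]
      exact abs_inner_le_of_mem a' ha' Q' hQ'1 w' c hc j
    obtain ⟨x, hx, _, hxp⟩ := mem_cube_of_coords a' ha' Q' hQ'2 w' p hb
    exact ⟨x, hx, hxp.symm⟩
  -- rigidity
  obtain ⟨i', s, hs, hcoleq⟩ := rigidity a a' ha ha' Q Q' w w' hQ1 hQ2 hQ'1 hQ'2 hset i
  have hs0 : s ≠ 0 := by rcases hs with h | h <;> rw [h] <;> norm_num
  have hspan : (ℝ ∙ qcol Q' i') = (ℝ ∙ qcol Q i) := by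
    rw [hcoleq]
    exact (Submodule.span_singleton_smul_eq (IsUnit.mk0 s hs0) _).symm
  -- the vertex
  set εE : E3 := (WithLp.equiv 2 (Fin 3 → ℝ)).symm ε with hεE
  have hεk : ∀ k, εE k = ε k := fun k => rfl
  have hεC : εE ∈ C0 := by
    intro k
    rw [hεk]
    rcases hε k with h | h <;> rw [h] <;> constructor <;> norm_num
  set q : E3 := a • Matrix.toEuclideanLin Q εE + w with hq
  have hqmem : q ∈ cubeImage a' Q' w' := by
    rw [← hset]
    exact ⟨εE, hεC, rfl⟩
  have hmemproj : Submodule.orthogonalProjectionOnto (facePlane Q' i') q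
      ∈ Submodule.orthogonalProjectionOnto (facePlane Q' i') '' A := by
    rw [hdata i']
    exact Set.mem_image_of_mem _ hqmem
  obtain ⟨p, hpA, hpq⟩ := hmemproj
  have hperp : p - q ∈ ℝ ∙ qcol Q i := by
    have := proj_sub_mem (facePlane Q' i') p q hpq
    rwa [facePlane_eq Q' hQ'1 hQ'2 i', Submodule.orthogonal_orthogonal, hspan] at this
  have hinner := inner_eq_of_sub_mem_span Q hQ1 i p q hperp
  -- p is in the cube
  have hpC : p ∈ cubeImage a Q w := by rw [hset]; exact hA hpA
  have hbp : ∀ j, |⟪qcol Q j, p - w⟫| ≤ a := fun j =>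
    abs_inner_le_of_mem a ha Q hQ1 w p hpC j
  obtain ⟨x, hx, hxco, hxp⟩ := mem_cube_of_coords a ha Q hQ2 w p hbp
  refine ⟨p, hpA, x, hx, ?_, hxp⟩
  intro j hj
  have hqw : ⟪qcol Q j, q - w⟫ = a * ε j := by
    have h1 : q - w = a • Matrix.toEuclideanLin Q εE := by rw [hq]; abel
    rw [h1, real_inner_smul_right, inner_qcol_toEucl, hQ1]
    have : ∑ k, (1 : Matrix (Fin 3) (Fin 3) ℝ) j k * εE k = ε j := by
      simp [Matrix.one_apply, hεk]
    rw [this]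
  have hinj := hinner j hj
  have : ⟪qcol Q j, p - w⟫ = ⟪qcol Q j, q - w⟫ := by
    rw [inner_sub_right, inner_sub_right, hinj]
  rw [hxco j, this, hqw, ← mul_assoc, inv_mul_cancel₀ (ne_of_gt ha), one_mul]
end
end

section
/- Let φ₁,...,φₙ : ℝ³ → ℝ³ be the homotheties φ_i(x) = c(x - p_i) + p_i with common ratio c ∈ (0,1) and centers p₁,...,pₙ ∈ ℝ³, and let A be the attractor of {φ₁,...,φₙ}. Then the convex hull of A equals the convex hull of {p₁,...,pₙ}. -/
/- STATEMENT 10: If φᵢ(x) = c(x - pᵢ) + pᵢ are homotheties of ℝ³ with common ratio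
c ∈ (0,1) and centers p₁,…,pₙ, and A is the attractor of {φ₁,…,φₙ}, then the convex hull
of A equals the convex hull of {p₁,…,pₙ}. -/

noncomputable section

theorem convexHull_homothety_attractor (n : ℕ) (c : ℝ) (hc : c ∈ Set.Ioo (0 : ℝ) 1)
    (p : Fin n → E3) (A : Set E3) (hne : A.Nonempty) (hcpt : IsCompact A)
    (hinv : A = ⋃ i : Fin n, (fun x => c • (x - p i) + p i) '' A) :
    convexHull ℝ A = convexHull ℝ (Set.range p) := by
  obtain ⟨a0, ha0⟩ := hne
  obtain ⟨hc0, hc1⟩ := hc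
  have hn : 0 < n := by
    by_contra h
    push_neg at h
    interval_cases n
    rw [hinv] at ha0
    simp at ha0
  have hsub : ∀ i : Fin n, ∀ x ∈ A, c • (x - p i) + p i ∈ A := fun i x hx => by
    rw [hinv]; exact Set.mem_iUnion.2 ⟨i, ⟨x, hx, rfl⟩⟩
  have hpA : ∀ i, p i ∈ A := by
    intro i
    have hseq : ∀ k : ℕ, c ^ k • (a0 - p i) + p i ∈ A := by
      intro k
      induction k with
      | zero => simpa using ha0
      | succ k ih =>
        have h2 := hsub i _ ih
        have h3 : c • (c ^ k • (a0 - p i) + p i - p i) + p i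
            = c ^ (k + 1) • (a0 - p i) + p i := by
          rw [add_sub_cancel_right, smul_smul, ← pow_succ']
        rwa [h3] at h2
    have htend : Filter.Tendsto (fun k : ℕ => c ^ k • (a0 - p i) + p i)
        Filter.atTop (nhds (p i)) := by
      have h0 : Filter.Tendsto (fun k : ℕ => (c : ℝ) ^ k) Filter.atTop (nhds 0) :=
        tendsto_pow_atTop_nhds_zero_of_lt_one (le_of_lt hc0) hc1
      have := (h0.smul_const (a0 - p i)).add_const (p i)
      simpa using this
    exact hcpt.isClosed.mem_of_tendsto htend (Filter.Eventually.of_forall hseq)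
  set K := convexHull ℝ (Set.range p) with hK
  have hKconv : Convex ℝ K := convex_convexHull _ _
  have hKcpt : IsCompact K := (Set.finite_range p).isCompact_convexHull (𝕜 := ℝ)
  have hpK : ∀ i, p i ∈ K := fun i => subset_convexHull _ _ ⟨i, rfl⟩
  have hKne : K.Nonempty := ⟨p ⟨0, hn⟩, hpK _⟩
  have hφK : ∀ i : Fin n, ∀ k ∈ K, c • (k - p i) + p i ∈ K := by
    intro i k hk
    have h4 : c • (k - p i) + p i = c • k + (1 - c) • p i := by
      rw [smul_sub, sub_smul, one_smul]; abel
    rw [h4]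
    exact hKconv hk (hpK i) (le_of_lt hc0) (by linarith) (by ring)
  have hAK : A ⊆ K := by
    have hcont : Continuous fun x : E3 => Metric.infDist x K :=
      Metric.continuous_infDist_pt K
    obtain ⟨a, haA, hmax⟩ := hcpt.exists_isMaxOn ⟨a0, ha0⟩ hcont.continuousOn
    have ha0dist : Metric.infDist a K = 0 := by
      have haU : a ∈ ⋃ i, (fun x => c • (x - p i) + p i) '' A := by
        rw [← hinv]; exact haA
      obtain ⟨i, b, hbA, hab⟩ := Set.mem_iUnion.1 haU
      obtain ⟨k0, hk0K, hk0⟩ := hKcpt.exists_infDist_eq_dist hKne b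
      have hdist : dist a (c • (k0 - p i) + p i) = c * dist b k0 := by
        rw [← hab]
        simp only [dist_eq_norm]
        have : c • (b - p i) + p i - (c • (k0 - p i) + p i) = c • (b - k0) := by
          rw [smul_sub, smul_sub, smul_sub]; abel
        rw [this, norm_smul, Real.norm_eq_abs, abs_of_pos hc0]
      have h5 : Metric.infDist a K ≤ c * Metric.infDist b K := by
        rw [hk0, ← hdist]
        exact Metric.infDist_le_dist_of_mem (hφK i k0 hk0K)
      have h6 : Metric.infDist b K ≤ Metric.infDist a K := hmax hbA
      have h7 : 0 ≤ Metric.infDist a K := Metric.infDist_nonneg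
      nlinarith
    intro x hx
    have h8 : Metric.infDist x K ≤ Metric.infDist a K := hmax hx
    have h9 : Metric.infDist x K = 0 :=
      le_antisymm (by rw [← ha0dist] at *; exact h8) Metric.infDist_nonneg
    exact (hKcpt.isClosed.mem_iff_infDist_zero hKne).2 h9
  refine Set.Subset.antisymm (convexHull_min hAK hKconv) (convexHull_mono ?_)
  rintro x ⟨i, rfl⟩
  exact hpA i
end
end
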